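/- Let φ and ψ be binary-equivalent satisfiable propositional formulas on the variables x₁,…,xₙ, let D_φ be a DNF that is M-equivalent to φ and D_ψ a DNF that is M-equivalent to ψ, and let D_φ^imp and D_ψ^imp denote the disjunctions of the non-contradictory terms of D_φ and of D_ψ respectively. Then for every M-valuation v with ⟦φ⟧_v < 0, one has ⟦D_φ^imp⟧_v = ⟦D_ψ^imp⟧_v. -/

import Mathlib

/-- Propositional formulas over `n` variables, built from `¬`, `∧`, `∨`. -/
inductive PropForm (n : ℕ) : Type where
  | var : Fin n → PropForm n
  | neg : PropForm n → PropForm n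
  | conj : PropForm n → PropForm n → PropForm n
  | disj : PropForm n → PropForm n → PropForm n

namespace PropForm

/-- The multiple-valued semantics `M` over the integers:
`∧` is `min`, `∨` is `max`, `¬` is integer negation. -/
def evalM {n : ℕ} (v : Fin n → ℤ) : PropForm n → ℤ
  | var i => v i
  | neg φ => -(evalM v φ)
  | conj φ ψ => min (evalM v φ) (evalM v ψ)
  | disj φ ψ => max (evalM v φ) (evalM v ψ)

/-- The binary semantics `B₂` over `Bool`. -/
def evalB {n : ℕ} (b : Fin n → Bool) : PropForm n → Bool
  | var i => b i
  | neg φ => !(evalB b φ)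
  | conj φ ψ => evalB b φ && evalB b ψ
  | disj φ ψ => evalB b φ || evalB b ψ

end PropForm

/-- A literal: a variable together with a polarity (`true` = positive). -/
abbrev Lit (n : ℕ) := Fin n × Bool

/-- `M`-value of a literal under a valuation. -/
def litValM {n : ℕ} (v : Fin n → ℤ) (l : Lit n) : ℤ :=
  if l.2 then v l.1 else -(v l.1)

/-- Binary value of a literal under a binary valuation. -/
def litValB {n : ℕ} (b : Fin n → Bool) (l : Lit n) : Bool :=
  if l.2 then b l.1 else !(b l.1)

/-- `M`-value of a conjunctive term (a list of literals), the minimum of the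
literal values (for nonempty terms; the value on `[]` is a dummy). -/
def Term.evalM {n : ℕ} (v : Fin n → ℤ) : List (Lit n) → ℤ
  | [] => 0
  | [l] => litValM v l
  | l :: ls => min (litValM v l) (Term.evalM v ls)

/-- Binary value of a conjunctive term: the conjunction of its literal values. -/
def Term.evalB {n : ℕ} (b : Fin n → Bool) (t : List (Lit n)) : Bool :=
  t.all (litValB b)

/-- `M`-value of a DNF (a list of conjunctive terms), the maximum of the
term values (for nonempty DNFs; the value on `[]` is a dummy). -/
def DNF.evalM {n : ℕ} (v : Fin n → ℤ) : List (List (Lit n)) → ℤ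
  | [] => 0
  | [t] => Term.evalM v t
  | t :: ts => max (Term.evalM v t) (DNF.evalM v ts)

/-- A term is contradictory if it contains both `x` and `¬x` for some variable. -/
def Contra {n : ℕ} (t : List (Lit n)) : Prop :=
  ∃ i : Fin n, ((i, true) : Lit n) ∈ t ∧ ((i, false) : Lit n) ∈ t

instance {n : ℕ} (t : List (Lit n)) : Decidable (Contra t) :=
  inferInstanceAs (Decidable (∃ i : Fin n, ((i, true) : Lit n) ∈ t ∧ ((i, false) : Lit n) ∈ t))

/-- The implicant (non-contradictory) part of a DNF. -/
def impPart {n : ℕ} (D : List (List (Lit n))) : List (List (Lit n)) :=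
  D.filter (fun t => decide (¬ Contra t))

section Aux
variable {n : ℕ}

lemma term_cons_cons (v : Fin n → ℤ) (l l' : Lit n) (ls : List (Lit n)) :
    Term.evalM v (l :: l' :: ls) = min (litValM v l) (Term.evalM v (l' :: ls)) := rfl

lemma term_le (v : Fin n → ℤ) : ∀ (t : List (Lit n)) (l : Lit n), l ∈ t → Term.evalM v t ≤ litValM v l
  | [], l, h => by simp at h
  | [x], l, h => by
      simp only [List.mem_singleton] at h; subst h; exact le_refl _
  | x :: y :: ys, l, h => by
      rw [term_cons_cons]
      rcases List.mem_cons.1 h with h | h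
      · subst h; exact min_le_left _ _
      · exact le_trans (min_le_right _ _) (term_le v (y :: ys) l h)

lemma term_exists (v : Fin n → ℤ) : ∀ (t : List (Lit n)), t ≠ [] → ∃ l ∈ t, Term.evalM v t = litValM v l
  | [], h => absurd rfl h
  | [x], _ => ⟨x, List.mem_singleton_self x, rfl⟩
  | x :: y :: ys, _ => by
      rw [term_cons_cons]
      rcases min_choice (litValM v x) (Term.evalM v (y :: ys)) with h | h
      · exact ⟨x, List.mem_cons_self, h⟩
      · obtain ⟨l, hl, hl'⟩ := term_exists v (y :: ys) (by simp)
        exact ⟨l, List.mem_cons_of_mem _ hl, h.trans hl'⟩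

lemma term_ge (v : Fin n → ℤ) (c : ℤ) : ∀ (t : List (Lit n)), t ≠ [] →
    (∀ l ∈ t, c ≤ litValM v l) → c ≤ Term.evalM v t := by
  intro t ht h
  obtain ⟨l, hl, hl'⟩ := term_exists v t ht
  rw [hl']; exact h l hl

lemma dnf_cons_cons (v : Fin n → ℤ) (t t' : List (Lit n)) (ts : List (List (Lit n))) :
    DNF.evalM v (t :: t' :: ts) = max (Term.evalM v t) (DNF.evalM v (t' :: ts)) := rfl

lemma dnf_ge_term (v : Fin n → ℤ) : ∀ (D : List (List (Lit n))) (t : List (Lit n)), t ∈ D →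
    Term.evalM v t ≤ DNF.evalM v D
  | [], t, h => by simp at h
  | [x], t, h => by simp only [List.mem_singleton] at h; subst h; exact le_refl _
  | x :: y :: ys, t, h => by
      rw [dnf_cons_cons]
      rcases List.mem_cons.1 h with h | h
      · subst h; exact le_max_left _ _
      · exact le_trans (dnf_ge_term v (y :: ys) t h) (le_max_right _ _)

lemma dnf_exists (v : Fin n → ℤ) : ∀ (D : List (List (Lit n))), D ≠ [] →
    ∃ t ∈ D, DNF.evalM v D = Term.evalM v t
  | [], h => absurd rfl h
  | [x], _ => ⟨x, List.mem_singleton_self x, rfl⟩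
  | x :: y :: ys, _ => by
      rw [dnf_cons_cons]
      rcases max_choice (Term.evalM v x) (DNF.evalM v (y :: ys)) with h | h
      · exact ⟨x, List.mem_cons_self, h⟩
      · obtain ⟨t, ht, ht'⟩ := dnf_exists v (y :: ys) (by simp)
        exact ⟨t, List.mem_cons_of_mem _ ht, h.trans ht'⟩

lemma dnf_le (v : Fin n → ℤ) (c : ℤ) (D : List (List (Lit n))) (hD : D ≠ [])
    (h : ∀ t ∈ D, Term.evalM v t ≤ c) : DNF.evalM v D ≤ c := by
  obtain ⟨t, ht, ht'⟩ := dnf_exists v D hD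
  rw [ht']; exact h t ht

lemma litValM_ne (v : Fin n → ℤ) (hv : ∀ i, v i ≠ 0) (l : Lit n) : litValM v l ≠ 0 := by
  rcases l with ⟨i, p⟩; cases p <;> simp [litValM, hv i]

lemma term_ne (v : Fin n → ℤ) (hv : ∀ i, v i ≠ 0) (t : List (Lit n)) (ht : t ≠ []) :
    Term.evalM v t ≠ 0 := by
  obtain ⟨l, _, hl'⟩ := term_exists v t ht
  rw [hl']; exact litValM_ne v hv l

/-- literal sign correspondence -/
lemma litValB_iff (v : Fin n → ℤ) (hv : ∀ i, v i ≠ 0) (b : Fin n → Bool)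
    (hb : ∀ i, b i = true ↔ 0 < v i) (l : Lit n) :
    litValB b l = true ↔ 0 < litValM v l := by
  rcases l with ⟨i, p⟩
  have h3 := hv i
  have h4 := hb i
  cases p <;> cases hbi : b i <;> rw [hbi] at h4 <;> simp at h4 <;>
    simp [litValB, litValM, hbi] <;> omega

lemma term_iff (v : Fin n → ℤ) (hv : ∀ i, v i ≠ 0) (b : Fin n → Bool)
    (hb : ∀ i, b i = true ↔ 0 < v i) (t : List (Lit n)) (ht : t ≠ []) :
    Term.evalB b t = true ↔ 0 < Term.evalM v t := by
  constructor
  · intro h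
    obtain ⟨l, hl, hl'⟩ := term_exists v t ht
    rw [hl']
    rw [← litValB_iff v hv b hb l]
    exact List.all_eq_true.1 h l hl
  · intro h
    refine List.all_eq_true.2 fun l hl => ?_
    rw [litValB_iff v hv b hb l]
    exact lt_of_lt_of_le h (term_le v t l hl)

/-- sign lemma for formulas -/
lemma evalM_sign (v : Fin n → ℤ) (hv : ∀ i, v i ≠ 0) (b : Fin n → Bool)
    (hb : ∀ i, b i = true ↔ 0 < v i) (φ : PropForm n) :
    (PropForm.evalB b φ = true ↔ 0 < PropForm.evalM v φ) ∧ PropForm.evalM v φ ≠ 0 := by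
  induction φ with
  | var i => simpa [PropForm.evalM, PropForm.evalB, hv i] using hb i
  | neg φ ih =>
      obtain ⟨h1, h2⟩ := ih
      constructor
      · simp only [PropForm.evalB, PropForm.evalM, Bool.not_eq_true']
        rw [← Bool.not_eq_true, h1]; omega
      · simp only [PropForm.evalM]; omega
  | conj φ ψ ihφ ihψ =>
      obtain ⟨h1, h2⟩ := ihφ; obtain ⟨h3, h4⟩ := ihψ
      constructor
      · simp only [PropForm.evalB, PropForm.evalM, Bool.and_eq_true, lt_min_iff, h1, h3]
      · simp only [PropForm.evalM]
        rcases min_choice (PropForm.evalM v φ) (PropForm.evalM v ψ) with h | h <;> rw [h] <;> assumption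
  | disj φ ψ ihφ ihψ =>
      obtain ⟨h1, h2⟩ := ihφ; obtain ⟨h3, h4⟩ := ihψ
      constructor
      · simp only [PropForm.evalB, PropForm.evalM, Bool.or_eq_true, lt_max_iff, h1, h3]
      · simp only [PropForm.evalM]
        rcases max_choice (PropForm.evalM v φ) (PropForm.evalM v ψ) with h | h <;> rw [h] <;> assumption

lemma mem_impPart {D : List (List (Lit n))} {t : List (Lit n)} :
    t ∈ impPart D ↔ t ∈ D ∧ ¬ Contra t := by
  simp [impPart, List.mem_filter]

lemma contra_false (b : Fin n → Bool) (t : List (Lit n)) (h : Contra t) :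
    Term.evalB b t ≠ true := by
  obtain ⟨i, h1, h2⟩ := h
  intro hall
  have hall' := List.all_eq_true.1 hall
  have e1 := hall' _ h1
  have e2 := hall' _ h2
  simp [litValB] at e1 e2
  rw [e1] at e2; exact absurd e2 (by simp)

/-- boolean equivalence of impPart with φ -/
lemma impPart_true_iff (φ : PropForm n) (Dφ : List (List (Lit n)))
    (hDφt : ∀ t ∈ Dφ, t ≠ [])
    (hDφ : ∀ v : Fin n → ℤ, (∀ i, v i ≠ 0) → DNF.evalM v Dφ = PropForm.evalM v φ)
    (b : Fin n → Bool) :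
    (∃ t ∈ impPart Dφ, Term.evalB b t = true) ↔ PropForm.evalB b φ = true := by
  set u : Fin n → ℤ := fun i => if b i then 1 else -1 with hu
  have hune : ∀ i, u i ≠ 0 := by intro i; simp only [hu]; split <;> simp
  have hbu : ∀ i, b i = true ↔ 0 < u i := by intro i; simp only [hu]; cases h : b i <;> simp
  have hsign := evalM_sign u hune b hbu φ
  constructor
  · rintro ⟨t, ht, htt⟩
    obtain ⟨htD, -⟩ := mem_impPart.1 ht
    have htne : t ≠ [] := hDφt t htD
    have : 0 < Term.evalM u t := (term_iff u hune b hbu t htne).1 htt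
    have : 0 < DNF.evalM u Dφ := lt_of_lt_of_le this (dnf_ge_term u Dφ t htD)
    rw [hDφ u hune] at this
    exact hsign.1.2 this
  · intro h
    have : 0 < PropForm.evalM u φ := hsign.1.1 h
    rw [← hDφ u hune] at this
    obtain ⟨t, htD, ht'⟩ := dnf_exists u Dφ (by rintro rfl; simp [DNF.evalM] at this)
    rw [ht'] at this
    have htne : t ≠ [] := hDφt t htD
    have htb : Term.evalB b t = true := (term_iff u hune b hbu t htne).2 this
    refine ⟨t, mem_impPart.2 ⟨htD, fun hc => contra_false b t hc htb⟩, htb⟩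

lemma litValB_eq (c : Fin n → Bool) (i : Fin n) (p : Bool) :
    litValB c (i, p) = true ↔ c i = p := by
  cases p <;> simp [litValB]

/-- main inequality -/
lemma main_le (φ ψ : PropForm n) (Dφ Dψ : List (List (Lit n)))
    (hDφt : ∀ t ∈ Dφ, t ≠ []) (hDψt : ∀ t ∈ Dψ, t ≠ [])
    (hbin : ∀ b : Fin n → Bool, PropForm.evalB b φ = PropForm.evalB b ψ)
    (hsat : ∃ b : Fin n → Bool, PropForm.evalB b φ = true)
    (hDφ : ∀ v : Fin n → ℤ, (∀ i, v i ≠ 0) → DNF.evalM v Dφ = PropForm.evalM v φ)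
    (hDψ : ∀ v : Fin n → ℤ, (∀ i, v i ≠ 0) → DNF.evalM v Dψ = PropForm.evalM v ψ)
    (v : Fin n → ℤ) (hv : ∀ i, v i ≠ 0)
    (b : Fin n → Bool) (hb : ∀ i, b i = true ↔ 0 < v i)
    (hneg : PropForm.evalB b φ = false) :
    DNF.evalM v (impPart Dψ) ≤ DNF.evalM v (impPart Dφ) := by
  -- impPart Dψ is nonempty
  obtain ⟨b0, hb0⟩ := hsat
  have hb0ψ : PropForm.evalB b0 ψ = true := (hbin b0) ▸ hb0
  obtain ⟨t0, ht0, -⟩ := (impPart_true_iff ψ Dψ hDψt hDψ b0).2 hb0ψ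
  have hne : impPart Dψ ≠ [] := by intro h; rw [h] at ht0; simp at ht0
  refine dnf_le v _ _ hne fun t ht => ?_
  obtain ⟨htD, htnc⟩ := mem_impPart.1 ht
  have htne : t ≠ [] := hDψt t htD
  -- t is false at b
  have htf : Term.evalB b t ≠ true := by
    intro htt
    have : PropForm.evalB b ψ = true := (impPart_true_iff ψ Dψ hDψt hDψ b).1 ⟨t, ht, htt⟩
    rw [← hbin b, hneg] at this; exact absurd this (by simp)
  -- hence Term.evalM v t < 0
  have htneg : Term.evalM v t < 0 := by
    have h1 : ¬ (0 < Term.evalM v t) := fun h => htf ((term_iff v hv b hb t htne).2 h)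
    have h2 := term_ne v hv t htne
    omega
  -- define the flipped valuation
  set b' : Fin n → Bool := fun i => if ((i, !(b i)) : Lit n) ∈ t then !(b i) else b i with hb'
  -- t is true at b'
  have htb' : Term.evalB b' t = true := by
    refine List.all_eq_true.2 fun l hl => ?_
    rcases l with ⟨i, p⟩
    rw [litValB_eq]
    by_cases hp : p = b i
    · subst hp
      simp only [hb']
      split
      · rename_i hmem
        cases hbi : b i
        · rw [hbi] at hl hmem
          exact absurd ⟨i, by simpa using hmem, hl⟩ htnc
        · rw [hbi] at hl hmem
          exact absurd ⟨i, hl, by simpa using hmem⟩ htnc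
      · rfl
    · have hp' : p = !(b i) := by cases p <;> cases h : b i <;> simp_all
      subst hp'
      simp only [hb']
      rw [if_pos hl]
  -- so φ is true at b'
  have hφb' : PropForm.evalB b' φ = true := by
    rw [hbin b']
    exact (impPart_true_iff ψ Dψ hDψt hDψ b').1 ⟨t, ht, htb'⟩
  -- get a true term s of impPart Dφ at b'
  obtain ⟨s, hs, hsb'⟩ := (impPart_true_iff φ Dφ hDφt hDφ b').2 hφb'
  have hsne : s ≠ [] := hDφt s (mem_impPart.1 hs).1
  -- Term.evalM v t ≤ litValM v m for each m ∈ s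
  have key : ∀ m ∈ s, Term.evalM v t ≤ litValM v m := by
    intro m hm
    rcases m with ⟨i, p⟩
    by_cases hmb : litValB b (i, p) = true
    · have : 0 < litValM v (i, p) := (litValB_iff v hv b hb (i, p)).1 hmb
      omega
    · -- m is false at b, but true at b', so b' i ≠ b i, so m ∈ t
      have hmb' : litValB b' (i, p) = true := List.all_eq_true.1 hsb' _ hm
      have hp : p = !(b i) := by
        rw [litValB_eq] at hmb
        cases p <;> cases h : b i <;> simp_all
      have hbi' : b' i = p := (litValB_eq b' i p).1 hmb'
      have hmem : ((i, !(b i)) : Lit n) ∈ t := by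
        by_contra hc
        simp only [hb', if_neg hc] at hbi'
        rw [hp] at hbi'; exact absurd hbi' (by cases b i <;> simp)
      rw [hp]
      exact term_le v t (i, !(b i)) hmem
  calc Term.evalM v t ≤ Term.evalM v s := term_ge v _ s hsne key
    _ ≤ DNF.evalM v (impPart Dφ) := dnf_ge_term v _ s hs

end Aux

/-- for binary-equivalent satisfiable formulas `φ` and `ψ` with
`M`-equivalent DNFs `Dφ` and `Dψ`, the non-contradictory parts of `Dφ` and `Dψ`
evaluate equally under every `M`-valuation making `φ` negative. -/
theorem impPart_eq_of_neg {n : ℕ} (φ ψ : PropForm n)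
    (Dφ Dψ : List (List (Lit n)))
    (hDφne : Dφ ≠ []) (hDφt : ∀ t ∈ Dφ, t ≠ [])
    (hDψne : Dψ ≠ []) (hDψt : ∀ t ∈ Dψ, t ≠ [])
    (hbin : ∀ b : Fin n → Bool, PropForm.evalB b φ = PropForm.evalB b ψ)
    (hsat : ∃ b : Fin n → Bool, PropForm.evalB b φ = true)
    (hDφ : ∀ v : Fin n → ℤ, (∀ i, v i ≠ 0) → DNF.evalM v Dφ = PropForm.evalM v φ)
    (hDψ : ∀ v : Fin n → ℤ, (∀ i, v i ≠ 0) → DNF.evalM v Dψ = PropForm.evalM v ψ) :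
    ∀ v : Fin n → ℤ, (∀ i, v i ≠ 0) → PropForm.evalM v φ < 0 →
      DNF.evalM v (impPart Dφ) = DNF.evalM v (impPart Dψ) := by
  intro v hv hneg
  set b : Fin n → Bool := fun i => decide (0 < v i) with hbdef
  have hb : ∀ i, b i = true ↔ 0 < v i := by intro i; simp [hbdef]
  have hsign := evalM_sign v hv b hb φ
  have hφb : PropForm.evalB b φ = false := by
    cases h : PropForm.evalB b φ
    · rfl
    · exact absurd (hsign.1.1 h) (by omega)
  have hsatψ : ∃ c : Fin n → Bool, PropForm.evalB c ψ = true := by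
    obtain ⟨b0, h0⟩ := hsat; exact ⟨b0, (hbin b0) ▸ h0⟩
  have hbinψ : ∀ c : Fin n → Bool, PropForm.evalB c ψ = PropForm.evalB c φ :=
    fun c => (hbin c).symm
  have hψb : PropForm.evalB b ψ = false := (hbin b) ▸ hφb
  have h1 := main_le φ ψ Dφ Dψ hDφt hDψt hbin hsat hDφ hDψ v hv b hb hφb
  have h2 := main_le ψ φ Dψ Dφ hDψt hDφt hbinψ hsatψ hDψ hDφ v hv b hb hψb
  exact le_antisymm h2 h1
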